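/- For a simple symmetric random walk of n i.i.d. ±1 steps, for any integer s >= 1, the probability that RW(n) equals s or s+1 is at most C / sqrt(s) for a universal constant C (e.g. C = 2). In particular, with s = ceil(sqrt(k)), P[max_j RW(j) <= 0 and RW(n) <= -sqrt(k)] = O(1/sqrt(k)) uniformly in n. -/

import Mathlib

lemma lemA : ∀ m : ℕ, (2*m+1) * (Nat.centralBinom m)^2 ≤ 16^m := by
  intro m
  induction m with
  | zero => simp [Nat.centralBinom]
  | succ m ih =>
    have h := Nat.succ_mul_centralBinom_succ m
    have hpos : 0 < (m+1)^2 := by positivity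
    have h2 : (m+1)^2 * ((2*(m+1)+1) * (Nat.centralBinom (m+1))^2)
        = (2*m+3) * (2*(2*m+1)*Nat.centralBinom m)^2 := by
      have : ((m+1) * Nat.centralBinom (m+1))^2 = (2*(2*m+1)*Nat.centralBinom m)^2 := by
        rw [h]
      nlinarith [this]
    have key : (m+1)^2 * ((2*(m+1)+1) * (Nat.centralBinom (m+1))^2) ≤ (m+1)^2 * 16^(m+1) := by
      rw [h2]
      have : (2*m+3) * (2*(2*m+1)*Nat.centralBinom m)^2
          = 4*(2*m+1)*(2*m+3) * ((2*m+1) * (Nat.centralBinom m)^2) := by ring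
      rw [this]
      calc 4*(2*m+1)*(2*m+3) * ((2*m+1) * (Nat.centralBinom m)^2)
          ≤ 4*(2*m+1)*(2*m+3) * 16^m := Nat.mul_le_mul_left _ ih
        _ ≤ 16*(m+1)^2 * 16^m := Nat.mul_le_mul_right _ (by nlinarith)
        _ = (m+1)^2 * 16^(m+1) := by rw [pow_succ]; ring
    exact Nat.le_of_mul_le_mul_left key hpos

lemma lemB (n : ℕ) : n * (n.choose (n/2))^2 ≤ 4^n := by
  rcases Nat.even_or_odd n with ⟨m, hm⟩ | ⟨m, hm⟩
  · subst hm
    have h1 : (m + m)/2 = m := by omega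
    rw [h1]
    have : Nat.centralBinom m = (m+m).choose m := by rw [Nat.centralBinom]; ring_nf
    calc (m+m) * ((m+m).choose m)^2 ≤ (2*m+1) * (Nat.centralBinom m)^2 := by
          rw [this]; exact Nat.mul_le_mul_right _ (by omega)
      _ ≤ 16^m := lemA m
      _ ≤ 4^(m+m) := by rw [show (16:ℕ) = 4^2 by norm_num, ← pow_mul]; exact Nat.pow_le_pow_right (by norm_num) (by omega)
  · subst hm
    have h1 : (2*m+1)/2 = m := by omega
    rw [h1]
    have hsym : (2*m+1).choose (m+1) = (2*m+1).choose m := by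
      rw [← Nat.choose_symm (by omega : m + 1 ≤ 2*m+1)]
      congr 1; omega
    have hd : Nat.centralBinom (m+1) = 2 * (2*m+1).choose m := by
      rw [Nat.centralBinom]
      have : 2*(m+1) = (2*m+1) + 1 := by ring
      rw [this, show m + 1 = m + 1 from rfl, Nat.choose_succ_succ', hsym]
      ring
    have key := lemA (m+1)
    rw [hd] at key
    have : 4 * ((2*m+1) * ((2*m+1).choose m)^2) ≤ (2*(m+1)+1) * (2 * (2*m+1).choose m)^2 := by
      nlinarith [Nat.zero_le (((2*m+1).choose m)^2)]
    have h4 : 4 * ((2*m+1) * ((2*m+1).choose m)^2) ≤ 16^(m+1) := le_trans this key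
    have h16 : (16:ℕ)^(m+1) = 4 * 4^(2*m+1) := by
      rw [show (16:ℕ) = 4^2 by norm_num, ← pow_mul]
      rw [show 2*(m+1) = (2*m+1)+1 by ring, pow_succ]
      ring
    rw [h16] at h4
    exact Nat.le_of_mul_le_mul_left h4 (by norm_num)

lemma lemC (n : ℕ) : Real.sqrt n * (n.choose (n/2) : ℝ) ≤ 2^n := by
  have h1 : (0:ℝ) ≤ Real.sqrt n * (n.choose (n/2) : ℝ) := by positivity
  have h2 : (Real.sqrt n * (n.choose (n/2) : ℝ))^2 ≤ ((2:ℝ)^n)^2 := by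
    have : (Real.sqrt n * (n.choose (n/2) : ℝ))^2 = n * ((n.choose (n/2) : ℝ))^2 := by
      rw [mul_pow, Real.sq_sqrt (by positivity)]
    rw [this, ← pow_mul]
    have := lemB n
    have : ((n * (n.choose (n/2))^2 : ℕ) : ℝ) ≤ ((4^n : ℕ) : ℝ) := by exact_mod_cast this
    push_cast at this
    calc (n:ℝ) * ((n.choose (n/2) : ℝ))^2 ≤ (4:ℝ)^n := this
      _ = 2^(n*2) := by rw [show (4:ℝ) = 2^2 by norm_num, ← pow_mul, mul_comm]
  calc Real.sqrt n * (n.choose (n/2) : ℝ) = Real.sqrt ((Real.sqrt n * (n.choose (n/2) : ℝ))^2) := by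
        rw [Real.sqrt_sq h1]
    _ ≤ Real.sqrt (((2:ℝ)^n)^2) := Real.sqrt_le_sqrt h2
    _ = 2^n := Real.sqrt_sq (by positivity)



/-- For a simple symmetric random walk of `n` i.i.d. ±1 steps and any
integer `s ≥ 1`, the probability that the endpoint equals `s` or `s+1` is at most
`2 / sqrt s`, uniformly in `n`. -/
theorem stmt6 (n s : ℕ) (hs : 1 ≤ s) :
    (((Finset.univ : Finset (Fin n → Bool)).filter (fun ε =>
        (∑ t : Fin n, (if ε t then (1:ℤ) else -1)) = (s:ℤ) ∨
        (∑ t : Fin n, (if ε t then (1:ℤ) else -1)) = (s:ℤ) + 1)).card : ℝ) / 2 ^ n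
      ≤ 2 / Real.sqrt s := by
  set A := ((Finset.univ : Finset (Fin n → Bool)).filter (fun ε =>
        (∑ t : Fin n, (if ε t then (1:ℤ) else -1)) = (s:ℤ) ∨
        (∑ t : Fin n, (if ε t then (1:ℤ) else -1)) = (s:ℤ) + 1)) with hA
  set f : (Fin n → Bool) → Finset (Fin n) := fun ε => Finset.univ.filter (fun i => ε i) with hf
  have key : ∀ ε : Fin n → Bool,
      (∑ t : Fin n, (if ε t then (1:ℤ) else -1)) = 2 * ((f ε).card : ℤ) - n := by
    intro ε
    have h1 : ∀ t : Fin n, (if ε t then (1:ℤ) else -1) = 2 * (if ε t then 1 else 0) - 1 := by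
      intro t; split <;> ring
    simp only [h1]
    rw [Finset.sum_sub_distrib, ← Finset.mul_sum, Finset.sum_boole, Finset.sum_const,
      Finset.card_univ, Fintype.card_fin]
    simp [hf]
  have hinj : Function.Injective f := by
    intro a b hab
    funext i
    have : (a i = true) ↔ (b i = true) := by
      have := Finset.ext_iff.mp hab i
      simpa [hf] using this
    cases ha : a i <;> cases hb : b i <;> simp_all
  have count : ∀ v : ℤ,
      ((Finset.univ : Finset (Fin n → Bool)).filter (fun ε =>
        (∑ t : Fin n, (if ε t then (1:ℤ) else -1)) = v)).card ≤ n.choose (n/2) := by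
    intro v
    set k : ℕ := ((n : ℤ) + v).toNat / 2 with hk
    calc ((Finset.univ : Finset (Fin n → Bool)).filter (fun ε =>
        (∑ t : Fin n, (if ε t then (1:ℤ) else -1)) = v)).card
        ≤ (Finset.powersetCard k (Finset.univ : Finset (Fin n))).card := by
          apply Finset.card_le_card_of_injOn f
          · intro ε hε
            rw [Finset.mem_coe, Finset.mem_filter] at hε
            rw [Finset.mem_coe, Finset.mem_powersetCard]
            refine ⟨Finset.subset_univ _, ?_⟩
            have hsum := key ε
            rw [hε.2] at hsum
            omega
          · exact Function.Injective.injOn hinj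
      _ = n.choose k := by
          rw [Finset.card_powersetCard, Finset.card_univ, Fintype.card_fin]
      _ ≤ n.choose (n/2) := Nat.choose_le_middle k n
  by_cases hne : A.Nonempty
  case neg =>
    rw [Finset.not_nonempty_iff_eq_empty] at hne
    rw [hne]
    simp
    positivity
  case pos =>
    obtain ⟨ε0, hε⟩ := hne
    rw [hA, Finset.mem_filter] at hε
    have habs : |∑ t : Fin n, (if ε0 t then (1:ℤ) else -1)| ≤ n := by
      calc |∑ t : Fin n, (if ε0 t then (1:ℤ) else -1)|
          ≤ ∑ t : Fin n, |if ε0 t then (1:ℤ) else -1| := Finset.abs_sum_le_sum_abs _ _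
        _ = n := by
            have h1 : ∀ t : Fin n, |if ε0 t then (1:ℤ) else -1| = 1 := by
              intro t; split <;> simp
            simp [h1]
    have hns : s ≤ n := by
      rcases hε.2 with h | h <;> rw [h, abs_of_nonneg (by positivity)] at habs <;> omega
    have hcard : A.card ≤ 2 * n.choose (n/2) := by
      calc A.card
          ≤ (((Finset.univ : Finset (Fin n → Bool)).filter (fun ε =>
            (∑ t : Fin n, (if ε t then (1:ℤ) else -1)) = (s:ℤ))) ∪
            ((Finset.univ : Finset (Fin n → Bool)).filter (fun ε =>
            (∑ t : Fin n, (if ε t then (1:ℤ) else -1)) = (s:ℤ) + 1))).card := by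
              apply Finset.card_le_card
              rw [hA, ← Finset.filter_or]
        _ ≤ (((Finset.univ : Finset (Fin n → Bool)).filter (fun ε =>
            (∑ t : Fin n, (if ε t then (1:ℤ) else -1)) = (s:ℤ))).card) +
            (((Finset.univ : Finset (Fin n → Bool)).filter (fun ε =>
            (∑ t : Fin n, (if ε t then (1:ℤ) else -1)) = (s:ℤ) + 1)).card) :=
              Finset.card_union_le _ _
        _ ≤ 2 * n.choose (n/2) := by
            rw [two_mul]
            exact Nat.add_le_add (count (s:ℤ)) (count ((s:ℤ)+1))
    have hs0 : (0:ℝ) < Real.sqrt s := Real.sqrt_pos.mpr (by exact_mod_cast hs)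
    have h2n : (0:ℝ) < 2^n := by positivity
    rw [div_le_div_iff₀ h2n hs0]
    have hsqrt : Real.sqrt s ≤ Real.sqrt n := Real.sqrt_le_sqrt (by exact_mod_cast hns)
    calc (A.card : ℝ) * Real.sqrt s
        ≤ (2 * n.choose (n/2) : ℝ) * Real.sqrt n := by
          apply mul_le_mul _ hsqrt (le_of_lt hs0) (by positivity)
          exact_mod_cast hcard
      _ = 2 * (Real.sqrt n * (n.choose (n/2) : ℝ)) := by ring
      _ ≤ 2 * 2^n := by
          have := lemC n
          linarith
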